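/- If (π_X, v, w, H', K') is a covariant representation of (G,η,X) with Φ(x) = W'* π_X(x) V' where W' : K → K' is a coisometry and V' ∈ L(H,H'), and if [π_X(X)*W'K] = H', then the underlying *-representation π_A satisfies φ(⟨x,y⟩) = V'* π_A(⟨x,y⟩) V' for all x,y ∈ X and [π_A(A)V'H] = H', where φ is the underlying completely positive map of Φ; i.e., (π_A, H', V') is a minimal Stinespring dilation of φ. -/
import Mathlib


noncomputable section

open ContinuousLinearMap

/-- An element of the form `star c * c` (positivity in a star ring). -/
def StarPos {B : Type*} [Mul B] [Star B] (b : B) : Prop := ∃ c : B, b = star c * c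

/-- Complete positivity of a `ℂ`-linear map between star rings. -/
def IsCPMap {A B : Type*} [NonUnitalRing A] [StarRing A] [Module ℂ A]
    [NonUnitalRing B] [StarRing B] [Module ℂ B] (φ : A →ₗ[ℂ] B) : Prop :=
  ∀ (n : ℕ) (M : Matrix (Fin n) (Fin n) A), StarPos M → StarPos (M.map ⇑φ)

/-- A unitary representation of a group `G` on a Hilbert space. -/
def IsUnitaryRep {G H' : Type*} [Group G] [NormedAddCommGroup H']
    [InnerProductSpace ℂ H'] [CompleteSpace H'] (v : G → H' →L[ℂ] H') : Prop :=
  v 1 = 1 ∧ (∀ s t, v (s * t) = v s ∘L v t) ∧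
    ∀ t, adjoint (v t) ∘L v t = 1 ∧ v t ∘L adjoint (v t) = 1

/-- if `(π_X,v,w,H',K')` is a covariant representation of `(G,η,X)`
with `Φ(x) = W'* π_X(x) V'` for a coisometry `W'` and `[π_X(X)*W'K] = H'`, then
`(π_A, H', V')` is a minimal Stinespring dilation of the underlying completely
positive map `φ` of `Φ`. -/
theorem stmt_13
    {A : Type*} [NormedRing A] [StarRing A] [CStarRing A] [NormedAlgebra ℂ A]
    [CompleteSpace A] [StarModule ℂ A]
    {H K H' K' : Type*}
    [NormedAddCommGroup H] [InnerProductSpace ℂ H] [CompleteSpace H]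
    [NormedAddCommGroup K] [InnerProductSpace ℂ K] [CompleteSpace K]
    [NormedAddCommGroup H'] [InnerProductSpace ℂ H'] [CompleteSpace H']
    [NormedAddCommGroup K'] [InnerProductSpace ℂ K'] [CompleteSpace K']
    {X : Type*} {G : Type*} [Group G]
    (E : X → X → A)
    (hfull : (Submodule.span ℂ {a : A | ∃ x y, a = E x y}).topologicalClosure = ⊤)
    (η : G → X → X) (hη_one : ∀ x, η 1 x = x)
    (hη_mul : ∀ s t x, η (s * t) x = η s (η t x))
    (Φ : X → H →L[ℂ] K) (φ : A →ₗ[ℂ] (H →L[ℂ] H)) (hcp : IsCPMap φ)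
    (hΦ : ∀ x y, adjoint (Φ x) ∘L Φ y = φ (E x y))
    (πX : X → H' →L[ℂ] K') (πA : A →⋆ₐ[ℂ] (H' →L[ℂ] H'))
    (hrep : ∀ x y, adjoint (πX x) ∘L πX y = πA (E x y))
    (v : G → H' →L[ℂ] H') (hv : IsUnitaryRep v)
    (w : G → K' →L[ℂ] K') (hw : IsUnitaryRep w)
    (hcov : ∀ t x, πX (η t x) = w t ∘L πX x ∘L adjoint (v t))
    (V' : H →L[ℂ] H') (W' : K →L[ℂ] K') (hW' : W' ∘L adjoint W' = 1)
    (hΦeq : ∀ x, Φ x = adjoint W' ∘L πX x ∘L V')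
    (hK' : (Submodule.span ℂ {k : K' | ∃ x h, k = πX x (V' h)}).topologicalClosure = ⊤)
    (hH' : (Submodule.span ℂ {h : H' | ∃ x k, h = adjoint (πX x) (W' k)}).topologicalClosure = ⊤) :
    (∀ x y, φ (E x y) = adjoint V' ∘L πA (E x y) ∘L V') ∧
      (Submodule.span ℂ {h : H' | ∃ a h₀, h = πA a (V' h₀)}).topologicalClosure = ⊤ := by
  constructor
  · intro x y
    have h1 := hΦ x y
    rw [hΦeq x, hΦeq y, adjoint_comp, adjoint_comp, adjoint_adjoint] at h1
    rw [← h1, ← hrep x y]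
    ext h
    simp [comp_apply, ← adjoint_inner_right W']
    congr 1
    have : W' (adjoint W' (πX y (V' h))) = πX y (V' h) := by
      have := congrArg (fun f => f (πX y (V' h))) hW'
      simpa [comp_apply] using this
    simp [this]
  · set S : Set H' := {h : H' | ∃ a h₀, h = πA a (V' h₀)} with hS
    set T := (Submodule.span ℂ S).topologicalClosure with hT
    have hgen : {h : H' | ∃ x k, h = adjoint (πX x) (W' k)} ⊆ (T : Set H') := by
      rintro _ ⟨x, k, rfl⟩
      have hk : W' k ∈ (Submodule.span ℂ {k : K' | ∃ x h, k = πX x (V' h)}).topologicalClosure := by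
        rw [hK']; trivial
      have hmaps : Set.MapsTo (adjoint (πX x))
          (Submodule.span ℂ {k : K' | ∃ x h, k = πX x (V' h)} : Set K')
          (Submodule.span ℂ S : Set H') := by
        intro z hz
        have : Submodule.span ℂ {k : K' | ∃ x h, k = πX x (V' h)} ≤
            (Submodule.span ℂ S).comap ((adjoint (πX x)) : K' →ₗ[ℂ] H') := by
          rw [Submodule.span_le]
          rintro _ ⟨y, h, rfl⟩
          refine Submodule.subset_span ?_
          refine ⟨E x y, h, ?_⟩
          have := congrArg (fun f => f (V' h)) (hrep x y)
          simpa [comp_apply] using this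
        exact this hz
      have := map_mem_closure (adjoint (πX x)).continuous hk hmaps
      exact this
    have hle : (Submodule.span ℂ {h : H' | ∃ x k, h = adjoint (πX x) (W' k)}).topologicalClosure ≤ T := by
      apply Submodule.topologicalClosure_minimal
      · exact Submodule.span_le.mpr hgen
      · exact Submodule.isClosed_topologicalClosure _
    rw [hH'] at hle
    exact top_le_iff.mp hle
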